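/- Let A ⊂ ℝⁿ be a finite set whose convex hull has dimension n, let c_a > 0 for a ∈ A, define g_A(p) := ½·log(Σ_{a∈A} c_a·e^{2⟨a,p⟩}) and H_A(p) := ½·∇²g_A(p). Then for every Lebesgue measurable U ⊆ Conv(A): (2π)ⁿ·∫_{{p ∈ ℝⁿ : ∇g_A(p) ∈ U}} det(H_A(p)) dp = πⁿ·λ(U). Equivalently, the momentum map ∇g_A is volume-preserving up to the constant πⁿ from the toric manifold (ℝⁿ×[0,2π)ⁿ with volume form det(H_A(p)) dp dq) to Conv(A). -/

import Mathlib

set_option maxHeartbeats 1000000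


open MeasureTheory Finset

noncomputable section

namespace SparseRandom

variable {n : ℕ}

/-- The Kähler potential `g_A(p) = ½·log(∑_{a∈A} c_a·e^{2⟨a,p⟩})`. -/
def gAr (A : Finset (Fin n → ℝ)) (c : (Fin n → ℝ) → ℝ) (p : Fin n → ℝ) : ℝ :=
  (1 / 2) * Real.log (∑ a : A, c (a : Fin n → ℝ) * Real.exp (2 * ∑ j, (a : Fin n → ℝ) j * p j))

/-- The momentum map `∇g_A`. -/
def gradA (A : Finset (Fin n → ℝ)) (c : (Fin n → ℝ) → ℝ) (p : Fin n → ℝ) : Fin n → ℝ :=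
  fun j => fderiv ℝ (gAr A c) p (Pi.single j 1)

/-- `H_A(p) = ½·∇²g_A(p)`, half the Hessian of the Kähler potential. -/
def HessAr (A : Finset (Fin n → ℝ)) (c : (Fin n → ℝ) → ℝ) (p : Fin n → ℝ) :
    Matrix (Fin n) (Fin n) ℝ :=
  Matrix.of fun j k =>
    (1 / 2) * fderiv ℝ (fun x => fderiv ℝ (gAr A c) x (Pi.single j 1)) p (Pi.single k 1)

end SparseRandom

open SparseRandom

namespace S11

variable {n : ℕ} (A : Finset (Fin n → ℝ)) (c : (Fin n → ℝ) → ℝ)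

/-- dot product with `a` as a continuous linear map. -/
def dotCLM (a : Fin n → ℝ) : (Fin n → ℝ) →L[ℝ] ℝ :=
  ∑ j, a j • ContinuousLinearMap.proj j

@[simp] lemma dotCLM_apply (a p : Fin n → ℝ) : dotCLM a p = ∑ j, a j * p j := by
  simp [dotCLM, smul_eq_mul]

@[simp] lemma dotCLM_single (a : Fin n → ℝ) (j : Fin n) : dotCLM a (Pi.single j 1) = a j := by
  rw [dotCLM_apply]
  simp [Pi.single_apply, mul_ite]

def S (p : Fin n → ℝ) : ℝ := ∑ a ∈ A, c a * Real.exp (2 * ∑ j, a j * p j)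

def T (j : Fin n) (p : Fin n → ℝ) : ℝ := ∑ a ∈ A, c a * a j * Real.exp (2 * ∑ j', a j' * p j')

def Q (j k : Fin n) (p : Fin n → ℝ) : ℝ :=
  ∑ a ∈ A, c a * a j * a k * Real.exp (2 * ∑ j', a j' * p j')

lemma gAr_eq : gAr A c = fun p => (1 / 2) * Real.log (S A c p) := by
  funext p
  rw [gAr, S]
  congr 2
  exact Finset.sum_coe_sort A fun a => c a * Real.exp (2 * ∑ j, a j * p j)

variable {A c}

lemma S_pos (hc : ∀ a ∈ A, 0 < c a) (hA : A.Nonempty) (p : Fin n → ℝ) : 0 < S A c p :=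
  Finset.sum_pos (fun a ha => mul_pos (hc a ha) (Real.exp_pos _)) hA

variable (A c) in
/-- the derivative of `S`. -/
def S' (p : Fin n → ℝ) : (Fin n → ℝ) →L[ℝ] ℝ :=
  ∑ a ∈ A, (c a * Real.exp (2 * ∑ j, a j * p j) * 2) • dotCLM a

lemma hasFDerivAt_S (p : Fin n → ℝ) : HasFDerivAt (S A c) (S' A c p) p := by
  apply HasFDerivAt.fun_sum
  intro a _
  have h1 : HasFDerivAt (fun p : Fin n → ℝ => (2:ℝ) * dotCLM a p) ((2:ℝ) • dotCLM a) p :=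
    (dotCLM a).hasFDerivAt.const_mul 2
  have h2 := (h1.exp).const_mul (c a)
  have h3 : (c a • Real.exp (2 * dotCLM a p) • (2:ℝ) • dotCLM a)
      = (c a * Real.exp (2 * ∑ j, a j * p j) * 2) • dotCLM a := by
    apply ContinuousLinearMap.ext
    intro v
    simp only [ContinuousLinearMap.smul_apply, smul_eq_mul, dotCLM_apply]
    ring
  have h4 : (fun y : Fin n → ℝ => c a * Real.exp (2 * ∑ j, a j * y j))
      = fun y => c a * Real.exp (2 * dotCLM a y) := by
    funext y; simp
  rw [← h3, h4]
  exact h2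

variable (A c) in
/-- the derivative of `T j`. -/
def T' (j : Fin n) (p : Fin n → ℝ) : (Fin n → ℝ) →L[ℝ] ℝ :=
  ∑ a ∈ A, (c a * a j * Real.exp (2 * ∑ j', a j' * p j') * 2) • dotCLM a

lemma hasFDerivAt_T (j : Fin n) (p : Fin n → ℝ) : HasFDerivAt (T A c j) (T' A c j p) p := by
  apply HasFDerivAt.fun_sum
  intro a _
  have h1 : HasFDerivAt (fun p : Fin n → ℝ => (2:ℝ) * dotCLM a p) ((2:ℝ) • dotCLM a) p :=
    (dotCLM a).hasFDerivAt.const_mul 2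
  have h2 := (h1.exp).const_mul (c a * a j)
  have h3 : ((c a * a j) • Real.exp (2 * dotCLM a p) • (2:ℝ) • dotCLM a)
      = (c a * a j * Real.exp (2 * ∑ j', a j' * p j') * 2) • dotCLM a := by
    apply ContinuousLinearMap.ext
    intro v
    simp only [ContinuousLinearMap.smul_apply, smul_eq_mul, dotCLM_apply]
    ring
  have h4 : (fun y : Fin n → ℝ => c a * a j * Real.exp (2 * ∑ j', a j' * y j'))
      = fun y => (c a * a j) * Real.exp (2 * dotCLM a y) := by
    funext y; simp
  rw [← h3, h4]
  exact h2

variable (A c) in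
/-- the derivative of `gAr`. -/
def G (p : Fin n → ℝ) : (Fin n → ℝ) →L[ℝ] ℝ :=
  ((1 / 2) * (S A c p)⁻¹) • S' A c p

lemma hasFDerivAt_gAr (hc : ∀ a ∈ A, 0 < c a) (hA : A.Nonempty) (p : Fin n → ℝ) :
    HasFDerivAt (gAr A c) (G A c p) p := by
  rw [gAr_eq]
  have h1 : HasFDerivAt (fun p => Real.log (S A c p)) ((S A c p)⁻¹ • S' A c p) p :=
    (hasFDerivAt_S p).log (S_pos hc hA p).ne'
  have h2 := h1.const_mul (1 / 2 : ℝ)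
  refine h2.congr_fderiv ?_
  rw [G, smul_smul]

lemma S'_single (p : Fin n → ℝ) (j : Fin n) : S' A c p (Pi.single j 1) = 2 * T A c j p := by
  rw [S', T, ContinuousLinearMap.sum_apply, Finset.mul_sum]
  refine Finset.sum_congr rfl fun a _ => ?_
  simp only [ContinuousLinearMap.smul_apply, smul_eq_mul, dotCLM_single]
  ring

lemma gradA_eq (hc : ∀ a ∈ A, 0 < c a) (hA : A.Nonempty) :
    gradA A c = fun p j => T A c j p / S A c p := by
  funext p j
  rw [gradA, (hasFDerivAt_gAr hc hA p).fderiv, G, ContinuousLinearMap.smul_apply, S'_single,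
    smul_eq_mul, div_eq_inv_mul]
  ring

variable (A c) in
/-- Jacobian matrix of the momentum map. -/
def Mmat (p : Fin n → ℝ) : Matrix (Fin n) (Fin n) ℝ :=
  Matrix.of fun j k => 2 * (Q A c j k p * S A c p - T A c j p * T A c k p) / (S A c p) ^ 2

variable (A c) in
/-- Jacobian of the momentum map as a continuous linear map. -/
def MCLM (p : Fin n → ℝ) : (Fin n → ℝ) →L[ℝ] (Fin n → ℝ) :=
  LinearMap.toContinuousLinearMap (Mmat A c p).mulVecLin

@[simp] lemma MCLM_apply (p v : Fin n → ℝ) : MCLM A c p v = (Mmat A c p).mulVec v := rfl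

lemma sum_Q_mul (j : Fin n) (p v : Fin n → ℝ) :
    ∑ k, Q A c j k p * v k
      = ∑ a ∈ A, c a * a j * Real.exp (2 * ∑ j', a j' * p j') * (∑ k, a k * v k) := by
  calc ∑ k, Q A c j k p * v k
      = ∑ k, ∑ a ∈ A, c a * a j * a k * Real.exp (2 * ∑ j', a j' * p j') * v k := by
        refine Finset.sum_congr rfl fun k _ => ?_; rw [Q, Finset.sum_mul]
    _ = ∑ a ∈ A, ∑ k, c a * a j * a k * Real.exp (2 * ∑ j', a j' * p j') * v k :=
        Finset.sum_comm (s := (Finset.univ : Finset (Fin n))) (t := A)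
    _ = ∑ a ∈ A, c a * a j * Real.exp (2 * ∑ j', a j' * p j') * (∑ k, a k * v k) := by
        refine Finset.sum_congr rfl fun a _ => ?_
        rw [Finset.mul_sum Finset.univ (fun k => a k * v k)
          (c a * a j * Real.exp (2 * ∑ j', a j' * p j'))]
        refine Finset.sum_congr rfl fun k _ => ?_
        ring

lemma sum_T_mul (p v : Fin n → ℝ) :
    ∑ k, T A c k p * v k
      = ∑ a ∈ A, c a * Real.exp (2 * ∑ j', a j' * p j') * (∑ k, a k * v k) := by
  calc ∑ k, T A c k p * v k
      = ∑ k, ∑ a ∈ A, c a * a k * Real.exp (2 * ∑ j', a j' * p j') * v k := by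
        refine Finset.sum_congr rfl fun k _ => ?_; rw [T, Finset.sum_mul]
    _ = ∑ a ∈ A, ∑ k, c a * a k * Real.exp (2 * ∑ j', a j' * p j') * v k :=
        Finset.sum_comm (s := (Finset.univ : Finset (Fin n))) (t := A)
    _ = ∑ a ∈ A, c a * Real.exp (2 * ∑ j', a j' * p j') * (∑ k, a k * v k) := by
        refine Finset.sum_congr rfl fun a _ => ?_
        rw [Finset.mul_sum Finset.univ (fun k => a k * v k)
          (c a * Real.exp (2 * ∑ j', a j' * p j'))]
        refine Finset.sum_congr rfl fun k _ => ?_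
        ring

lemma T'_apply (j : Fin n) (p v : Fin n → ℝ) :
    T' A c j p v = 2 * ∑ a ∈ A, c a * a j * Real.exp (2 * ∑ j', a j' * p j') * (∑ k, a k * v k) := by
  rw [T', ContinuousLinearMap.sum_apply, Finset.mul_sum]
  refine Finset.sum_congr rfl fun a _ => ?_
  simp only [ContinuousLinearMap.smul_apply, smul_eq_mul, dotCLM_apply]
  ring

lemma S'_apply (p v : Fin n → ℝ) :
    S' A c p v = 2 * ∑ a ∈ A, c a * Real.exp (2 * ∑ j', a j' * p j') * (∑ k, a k * v k) := by
  rw [S', ContinuousLinearMap.sum_apply, Finset.mul_sum]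
  refine Finset.sum_congr rfl fun a _ => ?_
  simp only [ContinuousLinearMap.smul_apply, smul_eq_mul, dotCLM_apply]
  ring

lemma hasFDerivAt_ratio (hc : ∀ a ∈ A, 0 < c a) (hA : A.Nonempty) (j : Fin n) (p : Fin n → ℝ) :
    HasFDerivAt (fun x => T A c j x / S A c x)
      ((ContinuousLinearMap.proj j).comp (MCLM A c p)) p := by
  have hS := S_pos hc hA p
  have hinv : HasFDerivAt (fun x => (S A c x)⁻¹) ((-((S A c p) ^ 2)⁻¹) • S' A c p) p :=
    (hasDerivAt_inv hS.ne').comp_hasFDerivAt p (hasFDerivAt_S p)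
  have h := (hasFDerivAt_T (A := A) (c := c) j p).mul hinv
  have heq : (fun x => T A c j x / S A c x) = fun x => T A c j x * (S A c x)⁻¹ := by
    funext x; rw [div_eq_mul_inv]
  rw [heq]
  refine h.congr_fderiv ?_
  apply ContinuousLinearMap.ext
  intro v
  simp only [ContinuousLinearMap.coe_comp', Function.comp_apply, MCLM_apply,
    ContinuousLinearMap.proj_apply, ContinuousLinearMap.add_apply,
    ContinuousLinearMap.smul_apply, ContinuousLinearMap.coe_smul', Pi.smul_apply, smul_eq_mul]
  have e0 : (Matrix.mulVec (Mmat A c p) v) j = ∑ k, Mmat A c p j k * v k := rfl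
  have e1 : ∑ k, Mmat A c p j k * v k
      = (2 * ((∑ k, Q A c j k p * v k) * S A c p - T A c j p * (∑ k, T A c k p * v k)))
        / (S A c p) ^ 2 := by
    have estep : ∀ k : Fin n, Mmat A c p j k * v k
        = 2 * (Q A c j k p * v k * S A c p - T A c j p * (T A c k p * v k)) / (S A c p) ^ 2 :=
      fun k => by simp only [Mmat, Matrix.of_apply]; ring
    rw [Finset.sum_congr rfl (fun k _ => estep k), ← Finset.sum_div, ← Finset.mul_sum,
      Finset.sum_sub_distrib, ← Finset.sum_mul, ← Finset.mul_sum]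
  rw [e0, e1, sum_Q_mul, sum_T_mul, T'_apply, S'_apply]
  field_simp
  ring

lemma hasFDerivAt_gradA (hc : ∀ a ∈ A, 0 < c a) (hA : A.Nonempty) (p : Fin n → ℝ) :
    HasFDerivAt (gradA A c) (MCLM A c p) p := by
  rw [gradA_eq hc hA]
  exact hasFDerivAt_pi'.2 fun j => hasFDerivAt_ratio hc hA j p

lemma HessAr_eq (hc : ∀ a ∈ A, 0 < c a) (hA : A.Nonempty) (p : Fin n → ℝ) :
    HessAr A c p = (1 / 2 : ℝ) • Mmat A c p := by
  ext j k
  have h1 : (fun x => fderiv ℝ (gAr A c) x (Pi.single j 1)) = fun x => T A c j x / S A c x := by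
    funext x
    have := congrFun (congrFun (gradA_eq hc hA (A := A) (c := c)) x) j
    rw [← this]
    rfl
  rw [HessAr, Matrix.of_apply, h1, (hasFDerivAt_ratio hc hA j p).fderiv]
  simp only [ContinuousLinearMap.coe_comp', Function.comp_apply, MCLM_apply,
    ContinuousLinearMap.proj_apply, Matrix.smul_apply, smul_eq_mul]
  rw [Matrix.mulVec_single]
  simp

lemma mulVec_Mmat (j : Fin n) (p v : Fin n → ℝ) :
    (Mmat A c p).mulVec v j
      = 2 * ((∑ k, Q A c j k p * v k) * S A c p - T A c j p * (∑ k, T A c k p * v k))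
        / (S A c p) ^ 2 := by
  have e0 : (Matrix.mulVec (Mmat A c p) v) j = ∑ k, Mmat A c p j k * v k := rfl
  have estep : ∀ k : Fin n, Mmat A c p j k * v k
      = 2 * (Q A c j k p * v k * S A c p - T A c j p * (T A c k p * v k)) / (S A c p) ^ 2 :=
    fun k => by simp only [Mmat, Matrix.of_apply]; ring
  rw [e0, Finset.sum_congr rfl (fun k _ => estep k), ← Finset.sum_div, ← Finset.mul_sum,
    Finset.sum_sub_distrib, ← Finset.sum_mul, ← Finset.mul_sum]

lemma sum_vQ (p v : Fin n → ℝ) :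
    ∑ j, v j * ∑ k, Q A c j k p * v k
      = ∑ a ∈ A, c a * Real.exp (2 * ∑ j', a j' * p j') * (∑ k, a k * v k) ^ 2 := by
  calc ∑ j, v j * ∑ k, Q A c j k p * v k
      = ∑ j, v j * ∑ a ∈ A, c a * a j * Real.exp (2 * ∑ j', a j' * p j') * (∑ k, a k * v k) := by
        refine Finset.sum_congr rfl fun j _ => ?_
        rw [sum_Q_mul]
    _ = ∑ j, ∑ a ∈ A, v j * (c a * a j * Real.exp (2 * ∑ j', a j' * p j') * (∑ k, a k * v k)) := by
        refine Finset.sum_congr rfl fun j _ => ?_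
        rw [Finset.mul_sum A
          (fun a => c a * a j * Real.exp (2 * ∑ j', a j' * p j') * (∑ k, a k * v k)) (v j)]
    _ = ∑ a ∈ A, ∑ j, v j * (c a * a j * Real.exp (2 * ∑ j', a j' * p j') * (∑ k, a k * v k)) :=
        Finset.sum_comm (s := (Finset.univ : Finset (Fin n))) (t := A)
    _ = ∑ a ∈ A, c a * Real.exp (2 * ∑ j', a j' * p j') * (∑ k, a k * v k) ^ 2 := by
        refine Finset.sum_congr rfl fun a _ => ?_
        have : ∑ j, v j * (c a * a j * Real.exp (2 * ∑ j', a j' * p j') * (∑ k, a k * v k))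
            = (c a * Real.exp (2 * ∑ j', a j' * p j') * (∑ k, a k * v k)) * ∑ j, a j * v j := by
          rw [Finset.mul_sum Finset.univ (fun j => a j * v j)
            (c a * Real.exp (2 * ∑ j', a j' * p j') * (∑ k, a k * v k))]
          refine Finset.sum_congr rfl fun j _ => ?_
          ring
        rw [this]
        ring

lemma quadform_eq (p v : Fin n → ℝ) :
    dotProduct v ((Mmat A c p).mulVec v)
      = 2 * (S A c p * (∑ a ∈ A, c a * Real.exp (2 * ∑ j', a j' * p j') * (∑ k, a k * v k) ^ 2)
          - (∑ a ∈ A, c a * Real.exp (2 * ∑ j', a j' * p j') * (∑ k, a k * v k)) ^ 2)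
        / (S A c p) ^ 2 := by
  rw [dotProduct]
  have e : ∀ j, v j * (Mmat A c p).mulVec v j
      = 2 * (v j * (∑ k, Q A c j k p * v k) * S A c p
          - T A c j p * v j * (∑ k, T A c k p * v k)) / (S A c p) ^ 2 := by
    intro j
    rw [mulVec_Mmat]
    ring
  rw [Finset.sum_congr rfl (fun j _ => e j), ← Finset.sum_div, ← Finset.mul_sum,
    Finset.sum_sub_distrib, ← Finset.sum_mul]
  have e2 : ∑ j, v j * ∑ k, Q A c j k p * v k
      = ∑ a ∈ A, c a * Real.exp (2 * ∑ j', a j' * p j') * (∑ k, a k * v k) ^ 2 :=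
    sum_vQ p v
  have e3 : ∑ j, T A c j p * v j * (∑ k, T A c k p * v k)
      = (∑ k, T A c k p * v k) ^ 2 := by
    rw [← Finset.sum_mul, sq]
  have e4 : ∑ k, T A c k p * v k
      = ∑ a ∈ A, c a * Real.exp (2 * ∑ j', a j' * p j') * (∑ k, a k * v k) := sum_T_mul p v
  rw [e3, e4]
  have e5 : ∑ j, v j * ∑ k, Q A c j k p * v k
      = ∑ a ∈ A, c a * Real.exp (2 * ∑ j', a j' * p j') * (∑ k, a k * v k) ^ 2 := e2
  rw [e5]
  ring

lemma eq_zero_of_dot_eq (hdim : affineSpan ℝ (A : Set (Fin n → ℝ)) = ⊤) (x : Fin n → ℝ)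
    (m : ℝ) (h : ∀ a ∈ A, ∑ j, a j * x j = m) : x = 0 := by
  classical
  set φ : (Fin n → ℝ) →ₗ[ℝ] ℝ := ∑ j, x j • LinearMap.proj j with hφ
  have hφa : ∀ w : Fin n → ℝ, φ w = ∑ j, w j * x j := by
    intro w
    rw [hφ]
    rw [LinearMap.sum_apply]
    refine Finset.sum_congr rfl fun j _ => ?_
    simp [mul_comm]
  have hvs : vectorSpan ℝ (A : Set (Fin n → ℝ)) = ⊤ := by
    rw [← direction_affineSpan, hdim]
    exact AffineSubspace.direction_top ℝ _ _
  have hker : vectorSpan ℝ (A : Set (Fin n → ℝ)) ≤ LinearMap.ker φ := by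
    rw [vectorSpan_def, Submodule.span_le]
    rintro w ⟨a, ha, b, hb, rfl⟩
    simp only [SetLike.mem_coe, LinearMap.mem_ker, vsub_eq_sub, map_sub]
    rw [hφa, hφa, h a ha, h b hb, sub_self]
  rw [hvs, top_le_iff] at hker
  have hx0 : φ x = 0 := by
    have : x ∈ LinearMap.ker φ := by rw [hker]; trivial
    exact this
  rw [hφa] at hx0
  have hsq : ∀ j ∈ Finset.univ, x j * x j = 0 :=
    (Finset.sum_eq_zero_iff_of_nonneg (fun j _ => mul_self_nonneg (x j))).1 hx0
  funext j
  exact mul_self_eq_zero.mp (hsq j (Finset.mem_univ j))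

lemma quadform_pos (hdim : affineSpan ℝ (A : Set (Fin n → ℝ)) = ⊤)
    (hc : ∀ a ∈ A, 0 < c a) (hA : A.Nonempty) (p : Fin n → ℝ) {v : Fin n → ℝ} (hv : v ≠ 0) :
    0 < dotProduct v ((Mmat A c p).mulVec v) := by
  classical
  rw [quadform_eq]
  set E : (Fin n → ℝ) → ℝ := fun a => c a * Real.exp (2 * ∑ j', a j' * p j') with hE
  set Y : (Fin n → ℝ) → ℝ := fun a => ∑ k, a k * v k with hY
  have hEpos : ∀ a ∈ A, 0 < E a := fun a ha => mul_pos (hc a ha) (Real.exp_pos _)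
  have hS := S_pos hc hA p
  set P : ℝ := ∑ a ∈ A, E a * Y a with hP
  set m : ℝ := P / S A c p with hm
  have key : S A c p * (∑ a ∈ A, E a * Y a ^ 2) - P ^ 2
      = S A c p * ∑ a ∈ A, E a * (Y a - m) ^ 2 := by
    have expand : ∑ a ∈ A, E a * (Y a - m) ^ 2
        = (∑ a ∈ A, E a * Y a ^ 2) - 2 * m * P + m ^ 2 * S A c p := by
      have : ∀ a ∈ A, E a * (Y a - m) ^ 2
          = E a * Y a ^ 2 - 2 * m * (E a * Y a) + m ^ 2 * E a := fun a _ => by ring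
      rw [Finset.sum_congr rfl this, Finset.sum_add_distrib, Finset.sum_sub_distrib,
        ← Finset.mul_sum, ← Finset.mul_sum, ← hP]
      have : S A c p = ∑ a ∈ A, E a := by
        rw [S]
      rw [this]
    rw [expand, hm]
    field_simp
    ring
  have hne : ∃ a ∈ A, Y a ≠ m := by
    by_contra hcon
    push_neg at hcon
    exact hv (eq_zero_of_dot_eq hdim v m hcon)
  obtain ⟨a₀, ha₀, hY₀⟩ := hne
  have hsum : 0 < ∑ a ∈ A, E a * (Y a - m) ^ 2 := by
    refine Finset.sum_pos' (fun a ha => ?_) ⟨a₀, ha₀, ?_⟩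
    · exact mul_nonneg (hEpos a ha).le (sq_nonneg _)
    · exact mul_pos (hEpos a₀ ha₀) (sq_pos_of_ne_zero (sub_ne_zero.mpr hY₀))
  rw [key]
  positivity

lemma Q_symm (j k : Fin n) (p : Fin n → ℝ) : Q A c j k p = Q A c k j p :=
  Finset.sum_congr rfl fun a _ => by ring

lemma Mmat_posDef (hdim : affineSpan ℝ (A : Set (Fin n → ℝ)) = ⊤)
    (hc : ∀ a ∈ A, 0 < c a) (hA : A.Nonempty) (p : Fin n → ℝ) : (Mmat A c p).PosDef := by
  rw [Matrix.posDef_iff_dotProduct_mulVec]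
  constructor
  · ext j k
    simp only [Matrix.conjTranspose_apply, Mmat, Matrix.of_apply, star_trivial]
    rw [Q_symm]
    ring
  · intro x hx
    rw [star_trivial]
    exact quadform_pos hdim hc hA p hx

lemma Mmat_det_pos (hdim : affineSpan ℝ (A : Set (Fin n → ℝ)) = ⊤)
    (hc : ∀ a ∈ A, 0 < c a) (hA : A.Nonempty) (p : Fin n → ℝ) : 0 < (Mmat A c p).det :=
  (Mmat_posDef hdim hc hA p).det_pos

lemma nonempty_of_span (hdim : affineSpan ℝ (A : Set (Fin n → ℝ)) = ⊤) : A.Nonempty := by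
  rcases A.eq_empty_or_nonempty with h | h
  · exfalso
    rw [h] at hdim
    rw [Finset.coe_empty, AffineSubspace.span_empty] at hdim
    exact (AffineSubspace.bot_ne_top ℝ (Fin n → ℝ) (Fin n → ℝ)) hdim
  · exact h

lemma injective_gradA (hdim : affineSpan ℝ (A : Set (Fin n → ℝ)) = ⊤)
    (hc : ∀ a ∈ A, 0 < c a) (hA : A.Nonempty) : Function.Injective (gradA A c) := by
  intro p q hpq
  by_contra hne
  set v : Fin n → ℝ := q - p with hv
  have hv0 : v ≠ 0 := sub_ne_zero.mpr (fun h => hne h.symm)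
  set γ : ℝ → (Fin n → ℝ) := fun t => p + t • v with hγdef
  set h : ℝ → ℝ := fun t => ∑ j, gradA A c (γ t) j * v j with hh
  have hγ : ∀ t : ℝ, HasDerivAt γ v t := by
    intro t
    have : HasDerivAt (fun t : ℝ => t • v) ((1 : ℝ) • v) t := (hasDerivAt_id t).smul_const v
    simpa [hγdef] using this.const_add p
  have hder : ∀ t : ℝ, HasDerivAt h (dotProduct v ((Mmat A c (γ t)).mulVec v)) t := by
    intro t
    have hcomp : HasDerivAt (fun t => gradA A c (γ t)) ((Mmat A c (γ t)).mulVec v) t := by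
      have := (hasFDerivAt_gradA hc hA (γ t)).comp_hasDerivAt t (hγ t)
      exact this
    have hj : ∀ j : Fin n, HasDerivAt (fun t => gradA A c (γ t) j * v j)
        ((Mmat A c (γ t)).mulVec v j * v j) t := by
      intro j
      have hpj : HasDerivAt (fun t => gradA A c (γ t) j) ((Mmat A c (γ t)).mulVec v j) t :=
        hasDerivAt_pi.1 hcomp j
      exact hpj.mul_const (v j)
    have hsum := HasDerivAt.fun_sum (fun j (_ : j ∈ Finset.univ) => hj j)
    have : dotProduct v ((Mmat A c (γ t)).mulVec v)
        = ∑ j, (Mmat A c (γ t)).mulVec v j * v j := by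
      rw [dotProduct]
      exact Finset.sum_congr rfl fun j _ => mul_comm _ _
    rw [this]
    exact hsum
  have hmono : StrictMono h := by
    apply strictMono_of_deriv_pos
    intro t
    rw [(hder t).deriv]
    exact quadform_pos hdim hc hA (γ t) hv0
  have h01 : h 0 = h 1 := by
    have e0 : γ 0 = p := by simp [hγdef]
    have e1 : γ 1 = q := by simp [hγdef, hv]
    rw [hh]
    simp only [e0, e1, hpq]
  exact absurd h01 (hmono zero_lt_one).ne

lemma norm_le_sqrt_sum_sq (p : Fin n → ℝ) : ‖p‖ ≤ Real.sqrt (∑ j, p j ^ 2) := by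
  rw [pi_norm_le_iff_of_nonneg (Real.sqrt_nonneg _)]
  intro j
  rw [Real.norm_eq_abs, ← Real.sqrt_sq_eq_abs]
  exact Real.sqrt_le_sqrt (Finset.single_le_sum (fun k _ => sq_nonneg (p k)) (Finset.mem_univ j))

lemma gAr_lower_bound (hc : ∀ a ∈ A, 0 < c a) (hA : A.Nonempty) {a : Fin n → ℝ} (ha : a ∈ A)
    (p : Fin n → ℝ) :
    (1 / 2) * Real.log (c a) + ∑ j, a j * p j ≤ gAr A c p := by
  rw [gAr_eq]
  have h1 : c a * Real.exp (2 * ∑ j, a j * p j) ≤ S A c p := by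
    rw [S]
    exact Finset.single_le_sum (f := fun b : Fin n → ℝ => c b * Real.exp (2 * ∑ j, b j * p j))
      (fun b hb => mul_nonneg (hc b hb).le (Real.exp_pos _).le) ha
  have h2 : Real.log (c a * Real.exp (2 * ∑ j, a j * p j)) ≤ Real.log (S A c p) :=
    Real.log_le_log (mul_pos (hc a ha) (Real.exp_pos _)) h1
  rw [Real.log_mul (hc a ha).ne' (Real.exp_pos _).ne', Real.log_exp] at h2
  linarith

lemma surjOn_gradA (hdim : affineSpan ℝ (A : Set (Fin n → ℝ)) = ⊤)
    (hc : ∀ a ∈ A, 0 < c a) (hA : A.Nonempty) :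
    interior (convexHull ℝ (A : Set (Fin n → ℝ))) ⊆ Set.range (gradA A c) := by
  intro u hu
  obtain ⟨ε, hε, hball⟩ : ∃ ε > 0, Metric.ball u ε ⊆ convexHull ℝ (A : Set (Fin n → ℝ)) := by
    obtain ⟨ε, hε, hb⟩ := Metric.isOpen_iff.1 isOpen_interior u hu
    exact ⟨ε, hε, hb.trans interior_subset⟩
  set φ : (Fin n → ℝ) → ℝ := fun p => gAr A c p - ∑ j, u j * p j with hφ
  have hgdiff : Differentiable ℝ (gAr A c) :=
    fun p => (hasFDerivAt_gAr hc hA p).differentiableAt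
  have hφcont : Continuous φ := by
    apply hgdiff.continuous.sub
    exact continuous_finset_sum _ fun j _ => continuous_const.mul (continuous_apply j)
  set C : ℝ := A.inf' hA (fun a => (1 / 2) * Real.log (c a)) with hC
  have hbound : ∀ p : Fin n → ℝ, C + (ε / 2) * ‖p‖ ≤ φ p := by
    intro p
    set N : ℝ := Real.sqrt (∑ j, p j ^ 2) with hN
    have hNnorm : ‖p‖ ≤ N := norm_le_sqrt_sum_sq p
    have hsupport : ∃ a ∈ A, (∑ j, u j * p j) + (ε / 2) * N ≤ ∑ j, a j * p j := by
      rcases eq_or_ne p 0 with hp | hp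
      · obtain ⟨a, ha⟩ := hA
        refine ⟨a, ha, ?_⟩
        simp [hp, hN]
      · have hNpos : 0 < N := by
          rw [hN]
          apply Real.sqrt_pos.2
          have : ∃ j, p j ≠ 0 := by
            by_contra hcon
            push_neg at hcon
            exact hp (funext hcon)
          obtain ⟨j, hj⟩ := this
          exact Finset.sum_pos' (fun k _ => sq_nonneg _) ⟨j, Finset.mem_univ j,
            sq_pos_of_ne_zero hj⟩
        set x : Fin n → ℝ := u + (ε / 2 / N) • p with hx
        have hxball : x ∈ Metric.ball u ε := by
          rw [Metric.mem_ball, dist_eq_norm]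
          have : x - u = (ε / 2 / N) • p := by rw [hx]; abel
          rw [this, norm_smul]
          have h1 : ‖(ε / 2 / N : ℝ)‖ = ε / 2 / N := abs_of_pos (by positivity)
          rw [h1]
          calc ε / 2 / N * ‖p‖ ≤ ε / 2 / N * N := by
                apply mul_le_mul_of_nonneg_left hNnorm (by positivity)
            _ = ε / 2 := by field_simp
            _ < ε := by linarith
        have hxhull : x ∈ convexHull ℝ (A : Set (Fin n → ℝ)) := hball hxball
        -- linear functional w ↦ ∑ j, w j * p j is convex; maximum principle on convex hull
        set L : (Fin n → ℝ) →ₗ[ℝ] ℝ := ∑ j, p j • LinearMap.proj j with hL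
        have hLa : ∀ w : Fin n → ℝ, L w = ∑ j, w j * p j := by
          intro w
          rw [hL, LinearMap.sum_apply]
          refine Finset.sum_congr rfl fun j _ => ?_
          simp [mul_comm]
        have hconv : ConvexOn ℝ (convexHull ℝ (A : Set (Fin n → ℝ))) L :=
          L.convexOn (convex_convexHull ℝ _)
        obtain ⟨a, ha, hle⟩ := hconv.exists_ge_of_mem_convexHull
          (subset_convexHull ℝ (A : Set (Fin n → ℝ))) hxhull
        refine ⟨a, ha, ?_⟩
        have hLx : L x = (∑ j, u j * p j) + (ε / 2) * N := by
          rw [hLa, hx]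
          simp only [Pi.add_apply, Pi.smul_apply, smul_eq_mul]
          rw [show (∑ j, (u j + ε / 2 / N * p j) * p j)
              = (∑ j, u j * p j) + (ε / 2 / N) * ∑ j, p j ^ 2 from by
            rw [Finset.mul_sum, ← Finset.sum_add_distrib]
            exact Finset.sum_congr rfl fun j _ => by ring]
          have : (∑ j, p j ^ 2) = N ^ 2 := by
            rw [hN, Real.sq_sqrt]
            exact Finset.sum_nonneg fun j _ => sq_nonneg _
          rw [this]
          field_simp
        rw [← hLx, ← hLa a]
        exact hle
    obtain ⟨a, ha, hsup⟩ := hsupport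
    have hg := gAr_lower_bound hc hA ha p
    have hCle : C ≤ (1 / 2) * Real.log (c a) := Finset.inf'_le _ ha
    have : C + (ε / 2) * N ≤ φ p := by
      rw [hφ]
      simp only
      linarith
    refine le_trans ?_ this
    have : (ε / 2) * ‖p‖ ≤ (ε / 2) * N := mul_le_mul_of_nonneg_left hNnorm (by positivity)
    linarith
  have hcoer : Filter.Tendsto φ (Filter.cocompact _) Filter.atTop := by
    apply Filter.tendsto_atTop_mono hbound
    apply Filter.tendsto_atTop_add_const_left
    exact (tendsto_norm_cocompact_atTop).const_mul_atTop (by positivity)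
  obtain ⟨p₀, hp₀⟩ := hφcont.exists_forall_le hcoer
  have hmin : IsLocalMin φ p₀ := Filter.Eventually.of_forall hp₀
  have hφder : HasFDerivAt φ (G A c p₀ - dotCLM u) p₀ := by
    have h1 : HasFDerivAt (fun p : Fin n → ℝ => ∑ j, u j * p j) (dotCLM u) p₀ := by
      have := (dotCLM u).hasFDerivAt (x := p₀)
      convert this using 1
      funext w
      rw [dotCLM_apply]
    exact (hasFDerivAt_gAr hc hA p₀).sub h1
  have hzero : G A c p₀ - dotCLM u = 0 := hmin.hasFDerivAt_eq_zero hφder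
  have hGu : G A c p₀ = dotCLM u := by
    rwa [sub_eq_zero] at hzero
  refine ⟨p₀, ?_⟩
  funext j
  rw [gradA, (hasFDerivAt_gAr hc hA p₀).fderiv, hGu, dotCLM_single]

lemma continuous_S : Continuous (S A c) :=
  continuous_finset_sum _ fun a _ => continuous_const.mul
    (Real.continuous_exp.comp (continuous_const.mul
      (continuous_finset_sum _ fun j _ => continuous_const.mul (continuous_apply j))))

lemma continuous_T (j : Fin n) : Continuous (T A c j) :=
  continuous_finset_sum _ fun a _ => continuous_const.mul
    (Real.continuous_exp.comp (continuous_const.mul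
      (continuous_finset_sum _ fun j' _ => continuous_const.mul (continuous_apply j'))))

lemma continuous_Q (j k : Fin n) : Continuous (Q A c j k) :=
  continuous_finset_sum _ fun a _ => continuous_const.mul
    (Real.continuous_exp.comp (continuous_const.mul
      (continuous_finset_sum _ fun j' _ => continuous_const.mul (continuous_apply j'))))

lemma continuous_Mmat (hc : ∀ a ∈ A, 0 < c a) (hA : A.Nonempty) :
    Continuous fun p => Mmat A c p := by
  apply continuous_matrix
  intro j k
  simp only [Mmat, Matrix.of_apply]
  apply Continuous.div
  · exact continuous_const.mul ((((continuous_Q j k)).mul (continuous_S)).sub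
      ((continuous_T j).mul (continuous_T k)))
  · exact (continuous_S).pow 2
  · exact fun p => pow_ne_zero 2 (S_pos hc hA p).ne'

lemma continuous_Mmat_det (hc : ∀ a ∈ A, 0 < c a) (hA : A.Nonempty) :
    Continuous fun p => (Mmat A c p).det :=
  (continuous_Mmat hc hA).matrix_det

end S11

open S11 in

/-- The momentum map `∇g_A` is volume-preserving up to the constant
`πⁿ` : for every measurable `U ⊆ Conv(A)`,
`(2π)ⁿ·∫_{{p : ∇g_A(p) ∈ U}} det(H_A(p)) dp = πⁿ·λ(U)`. -/
theorem statement11 (n : ℕ) (A : Finset (Fin n → ℝ))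
    (hdim : affineSpan ℝ (A : Set (Fin n → ℝ)) = ⊤)
    (c : (Fin n → ℝ) → ℝ) (hc : ∀ a ∈ A, 0 < c a)
    (U : Set (Fin n → ℝ)) (hU : MeasurableSet U)
    (hUsub : U ⊆ convexHull ℝ (A : Set (Fin n → ℝ))) :
    (2 * Real.pi) ^ n * ∫ p in {p : Fin n → ℝ | gradA A c p ∈ U}, (HessAr A c p).det
      = Real.pi ^ n * (volume U).toReal := by
  classical
  have hA : A.Nonempty := nonempty_of_span hdim
  set f := gradA A c with hf
  have hdiff : ∀ p, HasFDerivAt f (MCLM A c p) p := hasFDerivAt_gradA hc hA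
  have hcont : Continuous f := by
    have hd : Differentiable ℝ f := fun p => (hdiff p).differentiableAt
    exact hd.continuous
  set s : Set (Fin n → ℝ) := {p | f p ∈ U} with hs_def
  have hs : MeasurableSet s := hU.preimage hcont.measurable
  have hCoV := lintegral_abs_det_fderiv_eq_addHaar_image (volume) hs
    (fun p _ => (hdiff p).hasFDerivWithinAt) ((injective_gradA hdim hc hA).injOn)
  have hdetCLM : ∀ p, (MCLM A c p).det = (Mmat A c p).det := by
    intro p
    show LinearMap.det _ = _
    rw [MCLM, LinearMap.coe_toContinuousLinearMap, ← Matrix.toLin'_apply',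
      LinearMap.det_toLin']
  have hMdet_pos : ∀ p, 0 < (Mmat A c p).det := Mmat_det_pos hdim hc hA
  have hHess : ∀ p, (HessAr A c p).det = (1 / 2 : ℝ) ^ n * (Mmat A c p).det := by
    intro p
    rw [HessAr_eq hc hA p, Matrix.det_smul, Fintype.card_fin]
  have hHess_pos : ∀ p, 0 < (HessAr A c p).det := by
    intro p
    rw [hHess p]
    exact mul_pos (by positivity) (hMdet_pos p)
  -- measure of the image
  have hcompact : IsCompact (convexHull ℝ (A : Set (Fin n → ℝ))) :=
    A.finite_toSet.isCompact_convexHull (𝕜 := ℝ)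
  have hfr : volume (frontier (convexHull ℝ (A : Set (Fin n → ℝ)))) = 0 :=
    (convex_convexHull ℝ _).addHaar_frontier volume
  have himage : f '' s = U ∩ Set.range f := by
    rw [hs_def]
    exact Set.image_preimage_eq_inter_range
  have hUdiff : volume (U \ Set.range f) = 0 := by
    apply measure_mono_null _ hfr
    intro x hx
    show x ∈ closure _ \ interior _
    refine ⟨subset_closure (hUsub hx.1), fun hint => hx.2 ?_⟩
    exact surjOn_gradA hdim hc hA hint
  have hμimg : volume (f '' s) = volume U := by
    rw [himage]
    refine le_antisymm (measure_mono Set.inter_subset_left) ?_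
    calc volume U = volume ((U ∩ Set.range f) ∪ (U \ Set.range f)) := by
          rw [Set.inter_union_diff]
      _ ≤ volume (U ∩ Set.range f) + volume (U \ Set.range f) := measure_union_le _ _
      _ = volume (U ∩ Set.range f) := by rw [hUdiff, add_zero]
  -- rewrite the lintegral
  have hintegrand : ∀ p, ENNReal.ofReal |(MCLM A c p).det|
      = ENNReal.ofReal ((2 : ℝ) ^ n) * ENNReal.ofReal ((HessAr A c p).det) := by
    intro p
    rw [hdetCLM, abs_of_pos (hMdet_pos p),
      ← ENNReal.ofReal_mul (by positivity : (0:ℝ) ≤ (2:ℝ) ^ n)]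
    congr 1
    rw [hHess p, ← mul_assoc, ← mul_pow]
    norm_num
  have hL : ENNReal.ofReal ((2:ℝ) ^ n) * ∫⁻ p in s, ENNReal.ofReal ((HessAr A c p).det)
      = volume U := by
    rw [← hμimg, ← hCoV, ← MeasureTheory.lintegral_const_mul' _ _ ENNReal.ofReal_ne_top]
    exact lintegral_congr fun p => (hintegrand p).symm
  have hUfin : volume U ≠ ⊤ :=
    (lt_of_le_of_lt (measure_mono hUsub) hcompact.measure_lt_top).ne
  have hLfin : (∫⁻ p in s, ENNReal.ofReal ((HessAr A c p).det)) ≠ ⊤ := by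
    intro htop
    rw [htop, ENNReal.mul_top (by simp [ENNReal.ofReal_eq_zero])] at hL
    exact hUfin hL.symm
  -- real integral
  have hmeas : Measurable fun p => (HessAr A c p).det := by
    have : Continuous fun p => (HessAr A c p).det := by
      have h2 : Continuous fun p => ((1/2 : ℝ) ^ n) * (Mmat A c p).det :=
        (continuous_const (y := ((1/2 : ℝ) ^ n))).mul (continuous_Mmat_det hc hA)
      convert h2 using 1
      funext p
      rw [hHess p]
    exact this.measurable
  have hint : ∫ p in s, (HessAr A c p).det
      = (∫⁻ p in s, ENNReal.ofReal ((HessAr A c p).det)).toReal := by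
    rw [MeasureTheory.integral_eq_lintegral_of_nonneg_ae
      (Filter.Eventually.of_forall fun p => (hHess_pos p).le)
      hmeas.aestronglyMeasurable]
  have h2n : (2:ℝ) ^ n * (∫⁻ p in s, ENNReal.ofReal ((HessAr A c p).det)).toReal
      = (volume U).toReal := by
    rw [← ENNReal.toReal_ofReal (by positivity : (0:ℝ) ≤ (2:ℝ)^n),
      ← ENNReal.toReal_mul, hL]
  calc (2 * Real.pi) ^ n * ∫ p in {p : Fin n → ℝ | gradA A c p ∈ U}, (HessAr A c p).det
      = Real.pi ^ n * ((2:ℝ) ^ n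
          * (∫⁻ p in s, ENNReal.ofReal ((HessAr A c p).det)).toReal) := by
        rw [show {p : Fin n → ℝ | gradA A c p ∈ U} = s from rfl, hint, mul_pow]
        ring
    _ = Real.pi ^ n * (volume U).toReal := by rw [h2n]
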